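/- Let (X,+) and (Y,+) be Abelian Polish groups and let I, J be σ-ideals with Borel bases on X and Y respectively, both possessing the Weaker Smital Property. Assume at least one of the following holds: (i) J is Borel-on-Borel, i.e. for every Borel C ⊆ X×Y the set {x ∈ X : C_x ∉ J} is Borel; (ii) J is measurable-on-measurable, i.e. for every C ∈ σ(Bor(X×Y) ∪ (I⊗J)) the set {x ∈ X : C_x ∉ J} belongs to σ(Bor(X) ∪ I); (iii) the pair (Bor(X×Y), I⊗J) has the positive rectangle property. Then the Fubini product I⊗J has the Weaker Smital Property on the product group X×Y. -/

import Mathlib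

open MeasureTheory
open scoped Pointwise

/-- `I` is a σ-ideal: contains singletons, closed under subsets and countable unions. -/
def IsSigmaIdeal {X : Type*} (I : Set (Set X)) : Prop :=
  (∀ x : X, {x} ∈ I) ∧
  (∀ A ∈ I, ∀ B : Set X, B ⊆ A → B ∈ I) ∧
  (∀ f : ℕ → Set X, (∀ n, f n ∈ I) → (⋃ n, f n) ∈ I)

/-- `I` has a Borel base: every member is contained in a Borel member. -/
def HasBorelBase {X : Type*} [MeasurableSpace X] (I : Set (Set X)) : Prop :=
  ∀ A ∈ I, ∃ B : Set X, MeasurableSet B ∧ A ⊆ B ∧ B ∈ I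

/-- The Weaker Smital Property. -/
def WSP {X : Type*} [TopologicalSpace X] [AddCommGroup X] [MeasurableSpace X]
    (I : Set (Set X)) : Prop :=
  ∃ D : Set X, D.Countable ∧ Dense D ∧
    ∀ B : Set X, MeasurableSet B → B ∉ I → (D + B)ᶜ ∈ I

/-- The Fubini product of two σ-ideals with Borel bases. -/
def FubiniProd {X Y : Type*} [MeasurableSpace X] [MeasurableSpace Y]
    (I : Set (Set X)) (J : Set (Set Y)) : Set (Set (X × Y)) :=
  {K | ∃ C : Set (X × Y), MeasurableSet C ∧ K ⊆ C ∧ {x : X | {y : Y | (x, y) ∈ C} ∉ J} ∈ I}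

/-- The σ-algebra generated by the Borel sets together with a family `I` of sets. -/
def measAlg {X : Type*} [MeasurableSpace X] (I : Set (Set X)) : MeasurableSpace X :=
  MeasurableSpace.generateFrom ({s : Set X | MeasurableSet s} ∪ I)

namespace FubiniWSPAux

lemma empty_mem {X : Type*} {I : Set (Set X)} (hI : IsSigmaIdeal I) (x : X) : (∅ : Set X) ∈ I :=
  hI.2.1 {x} (hI.1 x) ∅ (Set.empty_subset _)

lemma union2_mem {X : Type*} {I : Set (Set X)} (hI : IsSigmaIdeal I) {A B : Set X}
    (hA : A ∈ I) (hB : B ∈ I) : A ∪ B ∈ I := by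
  have h := hI.2.2 (fun n => if n = 0 then A else B) (by
    intro n
    cases n with
    | zero => simpa
    | succ n => simpa)
  refine hI.2.1 _ h _ ?_
  intro x hx
  rcases hx with hx | hx
  · exact Set.mem_iUnion.2 ⟨0, by simpa⟩
  · exact Set.mem_iUnion.2 ⟨1, by simpa⟩

/-- Approximation of `measAlg I`-measurable sets by Borel sets modulo `I`. -/
lemma measAlg_approx {X : Type*} [MeasurableSpace X] {I : Set (Set X)} (hI : IsSigmaIdeal I)
    (x₀ : X) {S : Set X} (hS : MeasurableSet[measAlg I] S) :
    ∃ T : Set X, MeasurableSet T ∧ T \ S ∈ I ∧ S \ T ∈ I := by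
  refine MeasurableSpace.generateFrom_induction ({s : Set X | MeasurableSet s} ∪ I)
    (fun s _ => ∃ T : Set X, MeasurableSet T ∧ T \ s ∈ I ∧ s \ T ∈ I)
    ?hC ?empty ?compl ?iUnion S hS
  case hC =>
    intro t ht _
    rcases ht with ht | ht
    · exact ⟨t, ht, by simpa using empty_mem hI x₀, by simpa using empty_mem hI x₀⟩
    · exact ⟨∅, MeasurableSet.empty, by simpa using empty_mem hI x₀,
        by simpa using ht⟩
  case empty => exact ⟨∅, MeasurableSet.empty, by simpa using empty_mem hI x₀,
      by simpa using empty_mem hI x₀⟩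
  case compl =>
    intro t ht ih
    obtain ⟨T, hT, h1, h2⟩ := ih
    refine ⟨Tᶜ, hT.compl, ?_, ?_⟩
    · exact hI.2.1 _ h2 _ (fun x hx => ⟨not_not.1 hx.2, hx.1⟩)
    · exact hI.2.1 _ h1 _ (fun x hx => ⟨not_not.1 hx.2, hx.1⟩)
  case iUnion =>
    intro s hs ih
    choose T hT h1 h2 using ih
    refine ⟨⋃ n, T n, MeasurableSet.iUnion hT, ?_, ?_⟩
    · refine hI.2.1 _ (hI.2.2 _ h1) _ ?_
      intro x hx
      obtain ⟨hx1, hx2⟩ := hx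
      obtain ⟨n, hn⟩ := Set.mem_iUnion.1 hx1
      exact Set.mem_iUnion.2 ⟨n, hn, fun h => hx2 (Set.mem_iUnion.2 ⟨n, h⟩)⟩
    · refine hI.2.1 _ (hI.2.2 _ h2) _ ?_
      intro x hx
      obtain ⟨hx1, hx2⟩ := hx
      obtain ⟨n, hn⟩ := Set.mem_iUnion.1 hx1
      exact Set.mem_iUnion.2 ⟨n, hn, fun h => hx2 (Set.mem_iUnion.2 ⟨n, h⟩)⟩

/-- Key lemma: if from every Borel `I⊗J`-positive set one can extract a Borel `I`-positive
set of points with `J`-positive sections, then `I⊗J` has WSP. -/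
lemma key {X Y : Type*} [TopologicalSpace X] [PolishSpace X] [AddCommGroup X]
    [IsTopologicalAddGroup X] [MeasurableSpace X] [BorelSpace X]
    [TopologicalSpace Y] [PolishSpace Y] [AddCommGroup Y]
    [IsTopologicalAddGroup Y] [MeasurableSpace Y] [BorelSpace Y]
    (I : Set (Set X)) (J : Set (Set Y))
    (hI : IsSigmaIdeal I) (hJ : IsSigmaIdeal J)
    (hIwsp : WSP I) (hJwsp : WSP J)
    (hpos : ∀ B : Set (X × Y), MeasurableSet B → B ∉ FubiniProd I J →
      ∃ A' : Set X, MeasurableSet A' ∧ A' ∉ I ∧ ∀ a ∈ A', {y : Y | (a, y) ∈ B} ∉ J) :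
    WSP (FubiniProd I J) := by
  obtain ⟨Dx, hDxc, hDxd, hDx⟩ := hIwsp
  obtain ⟨Dy, hDyc, hDyd, hDy⟩ := hJwsp
  refine ⟨Dx ×ˢ Dy, hDxc.prod hDyc, hDxd.prod hDyd, ?_⟩
  intro B hB hBpos
  set D : Set (X × Y) := Dx ×ˢ Dy with hD
  obtain ⟨A', hA'm, hA'pos, hA'sec⟩ := hpos B hB hBpos
  -- D + B is a countable union of translates of B, hence Borel
  have hDB : D + B = ⋃ d ∈ D, (fun p : X × Y => p - d) ⁻¹' B := by
    ext p
    simp only [Set.mem_add, Set.mem_iUnion, Set.mem_preimage]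
    constructor
    · rintro ⟨d, hd, b, hb, rfl⟩
      exact ⟨d, hd, by simpa [add_sub_cancel_left] using hb⟩
    · rintro ⟨d, hd, hpb⟩
      exact ⟨d, hd, p - d, hpb, by abel⟩
  have hDBm : MeasurableSet (D + B) := by
    rw [hDB]
    refine MeasurableSet.biUnion (hDxc.prod hDyc) ?_
    intro d _
    have hc : Continuous (fun p : X × Y => p - d) := continuous_id.sub continuous_const
    exact hB.preimage hc.measurable
  refine ⟨(D + B)ᶜ, hDBm.compl, le_refl _, ?_⟩
  -- the set of x whose section of (D+B)ᶜ is J-positive is contained in (Dx + A')ᶜ ∈ I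
  refine hI.2.1 _ (hDx A' hA'm hA'pos) _ ?_
  intro x hx
  simp only [Set.mem_setOf_eq] at hx
  -- show: x ∈ Dx + A' → section ∈ J, contradiction
  intro hxmem
  apply hx
  obtain ⟨d, hd, a, ha, rfl⟩ := hxmem
  have hBa : MeasurableSet {y : Y | (a, y) ∈ B} := hB.preimage measurable_prodMk_left
  have hsec := hDy _ hBa (hA'sec a ha)
  refine hJ.2.1 _ hsec _ ?_
  intro y hy
  simp only [Set.mem_setOf_eq, Set.mem_compl_iff] at hy ⊢
  intro hyD
  apply hy
  obtain ⟨e, he, c, hc, rfl⟩ := hyD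
  have : ((d, e) : X × Y) + (a, c) ∈ D + B :=
    Set.add_mem_add ⟨hd, he⟩ hc
  simpa using this

end FubiniWSPAux

/-- if `I` and `J` have WSP and `J` is Borel-on-Borel, or `J` is
measurable-on-measurable, or `(Bor(X×Y), I⊗J)` has the positive rectangle property,
then `I ⊗ J` has WSP. -/
theorem fubini_wsp
    {X Y : Type*} [TopologicalSpace X] [PolishSpace X] [AddCommGroup X]
    [IsTopologicalAddGroup X] [MeasurableSpace X] [BorelSpace X]
    [TopologicalSpace Y] [PolishSpace Y] [AddCommGroup Y]
    [IsTopologicalAddGroup Y] [MeasurableSpace Y] [BorelSpace Y]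
    (I : Set (Set X)) (J : Set (Set Y))
    (hI : IsSigmaIdeal I) (hIb : HasBorelBase I)
    (hJ : IsSigmaIdeal J) (hJb : HasBorelBase J)
    (hIwsp : WSP I) (hJwsp : WSP J)
    (halt :
      (∀ C : Set (X × Y), MeasurableSet C →
          MeasurableSet {x : X | {y : Y | (x, y) ∈ C} ∉ J}) ∨
      (∀ C : Set (X × Y), MeasurableSet[measAlg (FubiniProd I J)] C →
          MeasurableSet[measAlg I] {x : X | {y : Y | (x, y) ∈ C} ∉ J}) ∨
      (∀ C : Set (X × Y), MeasurableSet C → C ∉ FubiniProd I J →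
          ∃ A : Set X, ∃ B : Set Y, MeasurableSet A ∧ MeasurableSet B ∧
            (A ×ˢ B) ∉ FubiniProd I J ∧ ∃ K ∈ FubiniProd I J, A ×ˢ B ⊆ C ∪ K)) :
    WSP (FubiniProd I J) := by
  apply FubiniWSPAux.key I J hI hJ hIwsp hJwsp
  intro B hB hBpos
  -- in all cases, the set A = {x | B_x ∉ J} is I-positive
  have hA : {x : X | {y : Y | (x, y) ∈ B} ∉ J} ∉ I := by
    intro h
    exact hBpos ⟨B, hB, le_refl _, h⟩
  rcases halt with h | h | h
  · -- Borel-on-Borel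
    exact ⟨_, h B hB, hA, fun a ha => ha⟩
  · -- measurable-on-measurable
    have hBm : MeasurableSet[measAlg (FubiniProd I J)] B :=
      MeasurableSpace.measurableSet_generateFrom (Or.inl hB)
    obtain ⟨T, hT, hTS, hST⟩ := FubiniWSPAux.measAlg_approx hI (0 : X) (h B hBm)
    obtain ⟨N', hN'm, hNN', hN'⟩ := hIb _ hTS
    refine ⟨T \ N', hT.diff hN'm, ?_, ?_⟩
    · intro hcon
      apply hA
      have hT' : T ∈ I := by
        have := FubiniWSPAux.union2_mem hI hcon hN'
        refine hI.2.1 _ this _ ?_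
        intro x hx
        by_cases hxn : x ∈ N'
        · exact Or.inr hxn
        · exact Or.inl ⟨hx, hxn⟩
      have := FubiniWSPAux.union2_mem hI hT' hST
      refine hI.2.1 _ this _ ?_
      intro x hx
      by_cases hxt : x ∈ T
      · exact Or.inl hxt
      · exact Or.inr ⟨hx, hxt⟩
    · rintro a ⟨haT, haN⟩
      by_contra hcon
      exact haN (hNN' ⟨haT, fun h => h hcon⟩)
  · -- positive rectangle property
    obtain ⟨A₀, B₀, hA₀, hB₀, hrect, K, hK, hsub⟩ := h B hB hBpos
    obtain ⟨K', hK'm, hKK', hS⟩ := hK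
    obtain ⟨S', hS'm, hSS', hS'⟩ := hIb _ hS
    have hemJ : (∅ : Set Y) ∈ J := FubiniWSPAux.empty_mem hJ 0
    have hemI : (∅ : Set X) ∈ I := FubiniWSPAux.empty_mem hI 0
    -- B₀ ∉ J
    have hB₀pos : B₀ ∉ J := by
      intro hB₀J
      apply hrect
      refine ⟨A₀ ×ˢ B₀, hA₀.prod hB₀, le_refl _, ?_⟩
      have : {x : X | {y : Y | (x, y) ∈ A₀ ×ˢ B₀} ∉ J} = ∅ := by
        ext x
        simp only [Set.mem_setOf_eq, Set.mem_empty_iff_false, iff_false, not_not]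
        refine hJ.2.1 _ hB₀J _ ?_
        intro y hy
        exact hy.2
      rw [this]; exact hemI
    -- A₀ ∉ I
    have hA₀pos : A₀ ∉ I := by
      intro hA₀I
      apply hrect
      refine ⟨A₀ ×ˢ B₀, hA₀.prod hB₀, le_refl _, ?_⟩
      refine hI.2.1 _ hA₀I _ ?_
      intro x hx
      simp only [Set.mem_setOf_eq] at hx
      by_contra hxA
      apply hx
      have : {y : Y | (x, y) ∈ A₀ ×ˢ B₀} = ∅ := by
        ext y; simp only [Set.mem_setOf_eq, Set.mem_prod, Set.mem_empty_iff_false, iff_false]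
        rintro ⟨h1, _⟩; exact hxA h1
      rw [this]; exact hemJ
    refine ⟨A₀ \ S', hA₀.diff hS'm, ?_, ?_⟩
    · intro hcon
      apply hA₀pos
      have := FubiniWSPAux.union2_mem hI hcon hS'
      refine hI.2.1 _ this _ ?_
      intro x hx
      by_cases hxs : x ∈ S'
      · exact Or.inr hxs
      · exact Or.inl ⟨hx, hxs⟩
    · rintro a ⟨haA, haS⟩ hcon
      have haK : {y : Y | (a, y) ∈ K'} ∈ J := by
        by_contra hcontra
        exact haS (hSS' hcontra)
      apply hB₀pos
      have := FubiniWSPAux.union2_mem hJ hcon haK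
      refine hJ.2.1 _ this _ ?_
      intro y hy
      have : ((a, y) : X × Y) ∈ B ∪ K := hsub ⟨haA, hy⟩
      rcases this with h1 | h1
      · exact Or.inl h1
      · exact Or.inr (hKK' h1)
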